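/- If A ⊴ B are domain prelocales (A is a subprelocale of B preserving and reflecting entailment and preserving primes), then the map e : Â → B̂ sending a prime proper filter x of A to its upward closure in B is a well-defined embedding, with projection p(y) = y ∩ |A|; i.e. p ∘ e = id and e ∘ p ⊑ id, and e preserves all joins. -/

import Mathlib

/-- A coherent prelocale. -/
structure Prelocale (α : Type*) where
  le : α → α → Prop
  bot : α
  top : α
  sup : α → α → α
  inf : α → α → α
  le_refl : ∀ a, le a a
  le_trans : ∀ a b c, le a b → le b c → le a c
  bot_le : ∀ a, le bot a
  sup_le : ∀ a b c, le a c → le b c → le (sup a b) c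
  le_sup_left : ∀ a b, le a (sup a b)
  le_sup_right : ∀ a b, le b (sup a b)
  le_top : ∀ a, le a top
  le_inf : ∀ a b c, le a b → le a c → le a (inf b c)
  inf_le_left : ∀ a b, le (inf a b) a
  inf_le_right : ∀ a b, le (inf a b) b
  distrib : ∀ a b c, le (inf a (sup b c)) (sup (inf a b) (inf a c))

namespace Prelocale

variable {α β : Type*}

def eqv (A : Prelocale α) (a b : α) : Prop := A.le a b ∧ A.le b a

def prime (A : Prelocale α) (a : α) : Prop :=
  ∀ b c, A.le a (A.sup b c) → A.le a b ∨ A.le a c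

def con (A : Prelocale α) (a : α) : Prop := ¬ A.eqv a A.bot

def joinList (A : Prelocale α) : List α → α
  | [] => A.bot
  | a :: l => A.sup a (A.joinList l)

/-- Prime proper filters. -/
def IsPPF (A : Prelocale α) (x : Set α) : Prop :=
  (∀ a ∈ x, A.con a) ∧
  A.top ∈ x ∧
  (∀ a b, a ∈ x → b ∈ x → A.inf a b ∈ x) ∧
  (∀ a b, a ∈ x → A.le a b → b ∈ x) ∧
  (∀ a b, A.sup a b ∈ x → a ∈ x ∨ b ∈ x)

end Prelocale

/-- A domain prelocale. -/
structure DomainPrelocale (α : Type*) extends Prelocale α where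
  d1 : ∀ a, ∃ l : List α, (∀ b ∈ l, toPrelocale.prime b) ∧
        toPrelocale.eqv a (toPrelocale.joinList l)
  d2 : toPrelocale.prime top ∧ toPrelocale.con top
  d3 : ∀ a b, toPrelocale.prime a → toPrelocale.prime b →
        toPrelocale.prime (inf a b)

open Prelocale

/-- `A ⊴ B`, presented via an inclusion `i : α → β`: `A` is a subprelocale of `B`,
entailment is preserved and reflected, and primes are preserved. -/
structure SubPrelocale {α β : Type*} (A : Prelocale α) (B : Prelocale β)
    (i : α → β) : Prop where
  map_bot : i A.bot = B.bot
  map_top : i A.top = B.top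
  map_sup : ∀ a b, i (A.sup a b) = B.sup (i a) (i b)
  map_inf : ∀ a b, i (A.inf a b) = B.inf (i a) (i b)
  le_iff : ∀ a b, A.le a b ↔ B.le (i a) (i b)
  prime_mono : ∀ a, A.prime a → B.prime (i a)

/-- The embedding `e : Â → B̂` sending a prime proper filter of `A` to its
upward closure in `B`. -/
def embFilt {α β : Type*} (B : Prelocale β) (i : α → β) (x : Set α) : Set β :=
  {b | ∃ a ∈ x, B.le (i a) b}

/-- The projection `p : B̂ → Â`, `p(y) = y ∩ |A|`. -/
def projFilt {α β : Type*} (i : α → β) (y : Set β) : Set α := {a | i a ∈ y}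


namespace Prelocale

lemma le_joinList {α : Type*} (A : Prelocale α) :
    ∀ (l : List α), ∀ a ∈ l, A.le a (A.joinList l)
  | [] => by intro a ha; exact absurd ha List.not_mem_nil
  | b :: l => by
    intro a ha
    rcases List.mem_cons.mp ha with rfl | ha
    · exact A.le_sup_left _ _
    · exact A.le_trans _ _ _ (le_joinList A l a ha) (A.le_sup_right _ _)

lemma mem_of_joinList_mem {α : Type*} (A : Prelocale α) {x : Set α}
    (hx : IsPPF A x) : ∀ (l : List α), A.joinList l ∈ x → ∃ a ∈ l, a ∈ x
  | [], hb => absurd ⟨A.le_refl _, A.le_refl _⟩ (hx.1 _ hb)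
  | a :: l, hb => by
    rcases hx.2.2.2.2 _ _ hb with hm | hm
    · exact ⟨a, List.mem_cons_self, hm⟩
    · obtain ⟨c, hc, hcx⟩ := mem_of_joinList_mem A hx l hm
      exact ⟨c, List.mem_cons_of_mem _ hc, hcx⟩

end Prelocale

/-- If `A ⊴ B`, then `e : Â → B̂` is a well-defined embedding with projection
`p(y) = y ∩ |A|`: `e` maps prime proper filters to prime proper filters,
`p ∘ e = id`, `e ∘ p ⊑ id`, and `e` is left adjoint to `p` (hence preserves all
joins). -/
theorem sub_prelocale_embedding {α β : Type*}
    (A : DomainPrelocale α) (B : DomainPrelocale β) (i : α → β)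
    (h : SubPrelocale A.toPrelocale B.toPrelocale i) :
    (∀ x, IsPPF A.toPrelocale x → IsPPF B.toPrelocale (embFilt B.toPrelocale i x)) ∧
    (∀ x, IsPPF A.toPrelocale x → projFilt i (embFilt B.toPrelocale i x) = x) ∧
    (∀ y, IsPPF B.toPrelocale y → embFilt B.toPrelocale i (projFilt i y) ⊆ y) ∧
    (∀ y, IsPPF B.toPrelocale y → IsPPF A.toPrelocale (projFilt i y)) ∧
    (∀ x y, IsPPF A.toPrelocale x → IsPPF B.toPrelocale y →
      (embFilt B.toPrelocale i x ⊆ y ↔ x ⊆ projFilt i y)) := by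
  have emb_ppf : ∀ x, IsPPF A.toPrelocale x →
      IsPPF B.toPrelocale (embFilt B.toPrelocale i x) := by
    intro x hx
    obtain ⟨hcon, htop, hinf, hup, hsup⟩ := hx
    refine ⟨?_, ?_, ?_, ?_, ?_⟩
    · rintro b ⟨a, ha, hab⟩ ⟨hb1, -⟩
      exact hcon a ha ⟨(h.le_iff _ _).2 (by
        rw [h.map_bot]
        exact B.le_trans _ _ _ hab hb1), A.bot_le _⟩
    · exact ⟨A.top, htop, by rw [h.map_top]; exact B.le_refl _⟩
    · rintro b c ⟨a1, ha1, hb⟩ ⟨a2, ha2, hc⟩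
      refine ⟨A.inf a1 a2, hinf _ _ ha1 ha2, ?_⟩
      rw [h.map_inf]
      exact B.le_inf _ _ _ (B.le_trans _ _ _ (B.inf_le_left _ _) hb)
        (B.le_trans _ _ _ (B.inf_le_right _ _) hc)
    · rintro b c ⟨a, ha, hb⟩ hbc
      exact ⟨a, ha, B.le_trans _ _ _ hb hbc⟩
    · rintro b c ⟨a, ha, hbc⟩
      obtain ⟨l, hl, hal⟩ := A.d1 a
      have hjl : A.joinList l ∈ x := hup _ _ ha hal.1
      obtain ⟨p, hpl, hpx⟩ := Prelocale.mem_of_joinList_mem A.toPrelocale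
        ⟨hcon, htop, hinf, hup, hsup⟩ l hjl
      have hpa : A.le p a :=
        A.le_trans _ _ _ (Prelocale.le_joinList A.toPrelocale l p hpl) hal.2
      have hpbc : B.le (i p) (B.sup b c) :=
        B.le_trans _ _ _ ((h.le_iff _ _).1 hpa) hbc
      rcases h.prime_mono p (hl p hpl) _ _ hpbc with hp | hp
      · exact Or.inl ⟨p, hpx, hp⟩
      · exact Or.inr ⟨p, hpx, hp⟩
  have pe : ∀ x, IsPPF A.toPrelocale x →
      projFilt i (embFilt B.toPrelocale i x) = x := by
    intro x hx
    ext a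
    constructor
    · rintro ⟨a', ha', hle⟩
      exact hx.2.2.2.1 _ _ ha' ((h.le_iff _ _).2 hle)
    · intro ha
      exact ⟨a, ha, B.le_refl _⟩
  have ep : ∀ y, IsPPF B.toPrelocale y →
      embFilt B.toPrelocale i (projFilt i y) ⊆ y := by
    rintro y hy b ⟨a, ha, hab⟩
    exact hy.2.2.2.1 _ _ ha hab
  have proj_ppf : ∀ y, IsPPF B.toPrelocale y → IsPPF A.toPrelocale (projFilt i y) := by
    intro y hy
    obtain ⟨hcon, htop, hinf, hup, hsup⟩ := hy
    refine ⟨?_, ?_, ?_, ?_, ?_⟩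
    · rintro a ha ⟨h1, -⟩
      exact hcon _ ha ⟨by rw [← h.map_bot]; exact (h.le_iff _ _).1 h1, B.bot_le _⟩
    · show i A.top ∈ y
      rw [h.map_top]; exact htop
    · intro a b ha hb
      show i (A.inf a b) ∈ y
      rw [h.map_inf]; exact hinf _ _ ha hb
    · intro a b ha hab
      exact hup _ _ ha ((h.le_iff _ _).1 hab)
    · intro a b hab
      have : B.sup (i a) (i b) ∈ y := by rw [← h.map_sup]; exact hab
      exact hsup _ _ this
  refine ⟨emb_ppf, pe, ep, proj_ppf, ?_⟩
  intro x y hx hy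
  constructor
  · intro hs a ha
    exact hs ⟨a, ha, B.le_refl _⟩
  · rintro hs b ⟨a, ha, hab⟩
    exact hy.2.2.2.1 _ _ (hs ha) hab
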